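/- arXiv:2002.06764 — 2 statements merged into one kernel-verified Lean document; each statement's English description precedes it below -/
import Mathlib

section
/- Let ≈ be an SCER. A ≈-cover C of T is primitive (has no proper ≈-cover) if and only if C is a shortest ≈-cover of T. Consequently, any two primitive ≈-covers of T are ≈-equivalent. -/
variable {α : Type*}

/-- `substr X i j` is the 1-indexed inclusive substring `X[i:j]`. -/
def substr (X : List α) (i j : ℕ) : List α := (X.take j).drop (i - 1)

/-- A substring consistent equivalence relation (SCER). -/
structure SCER (r : List α → List α → Prop) : Prop where
  equiv : Equivalence r
  length_eq : ∀ X Y, r X Y → X.length = Y.length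
  substr_congr : ∀ X Y, r X Y → ∀ i j, 1 ≤ i → i ≤ j → j ≤ X.length →
    r (substr X i j) (substr Y i j)

/-- `B` is a `≈`-border of `T`: `B` is equivalent to a prefix and a suffix of `T`. -/
def IsBorder (r : List α → List α → Prop) (B T : List α) : Prop :=
  B.length ≤ T.length ∧ r B (T.take B.length) ∧ r B (T.drop (T.length - B.length))

/-- `C` is a `≈`-cover of `T`: there are occurrences `x 1 = 1 < ... < x m = |T|-|C|+1`
with consecutive gaps at most `|C|`. -/
def IsCover (r : List α → List α → Prop) (C T : List α) : Prop :=
  ∃ (m : ℕ) (x : ℕ → ℕ), 1 ≤ m ∧ x 1 = 1 ∧ x m = T.length - C.length + 1 ∧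
    (∀ k, 1 ≤ k → k ≤ m → r C (substr T (x k) (x k + C.length - 1))) ∧
    (∀ k, 1 < k → k ≤ m → x (k - 1) < x k ∧ x k ≤ x (k - 1) + C.length)

def IsProperCover (r : List α → List α → Prop) (C T : List α) : Prop :=
  IsCover r C T ∧ C.length < T.length

/-- A string is primitive if it has no proper `≈`-cover. -/
def Primitive (r : List α → List α → Prop) (T : List α) : Prop :=
  ¬ ∃ C : List α, IsProperCover r C T

/-- `S` is a left `≈`-seed of `T`. -/
def IsLeftSeed (r : List α → List α → Prop) (S T : List α) : Prop :=
  ∃ k l, k ≤ l ∧ l < S.length ∧ IsCover r S (T.take (T.length - k)) ∧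
    r (S.take l) (T.drop (T.length - l))

/-- `Bd` is the `≈`-border array of `T`:
`Bd i` is the maximum length of a proper `≈`-border of `T[1:i]`. -/
def BorderArr (r : List α → List α → Prop) (T : List α) (Bd : ℕ → ℕ) : Prop :=
  ∀ i, 1 ≤ i → i ≤ T.length →
    IsGreatest {b | ∃ B : List α, B.length = b ∧ b < i ∧ IsBorder r B (T.take i)} (Bd i)

/-- `L` is the longest `≈`-cover array of `T`:
`L i = max({|C| : C proper ≈-cover of T[1:i]} ∪ {0})`. -/
def LCoverArr (r : List α → List α → Prop) (T : List α) (L : ℕ → ℕ) : Prop :=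
  ∀ i, 1 ≤ i → i ≤ T.length →
    IsGreatest (insert 0 {c | ∃ C : List α, C.length = c ∧ IsProperCover r C (T.take i)})
      (L i)

section AuxStmt9

variable {r : List α → List α → Prop}

lemma substr_one' (T : List α) (j : ℕ) : substr T 1 j = T.take j := by
  simp [substr]

lemma substr_take' (T : List α) (b i j : ℕ) (hj : j ≤ b) :
    substr (T.take b) i j = substr T i j := by
  simp [substr, List.take_take, Nat.min_eq_left hj]

lemma substr_substr' (T : List α) (z y a L : ℕ) (hz : 1 ≤ z) (hy : 1 ≤ y)
    (hj : y + a - 1 ≤ L) (ha : 1 ≤ a) :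
    substr (substr T z (z + L - 1)) y (y + a - 1) = substr T (z + y - 1) (z + y - 1 + a - 1) := by
  simp only [substr, List.take_drop, List.drop_drop, List.take_take]
  congr 1
  · omega
  · congr 1
    omega

lemma cover_prefix' {u T : List α} (hC : IsCover r u T) : r u (T.take u.length) := by
  obtain ⟨m, x, hm, hx1, hxm, hocc, hgap⟩ := hC
  have hh := hocc 1 le_rfl hm
  rw [hx1] at hh
  have e : 1 + u.length - 1 = u.length := by omega
  rwa [e, substr_one'] at hh

lemma cover_le' (h : SCER r) {u T : List α} (hC : IsCover r u T) : u.length ≤ T.length := by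
  have := h.length_eq _ _ (cover_prefix' hC)
  simp only [List.length_take] at this
  omega

lemma cover_nil' {u T : List α} (hC : IsCover r u T) (hu : u.length = 0) : T.length = 0 := by
  obtain ⟨m, x, hm, hx1, hxm, hocc, hgap⟩ := hC
  rcases eq_or_lt_of_le hm with h1 | h1
  · rw [← h1] at hxm
    omega
  · have := hgap 2 (by omega) (by omega)
    simp only [show (2:ℕ) - 1 = 1 from rfl] at this
    omega

lemma cover_suffix' (h : SCER r) {u T : List α} (hC : IsCover r u T) :
    r u (T.drop (T.length - u.length)) := by
  have hle := cover_le' h hC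
  obtain ⟨m, x, hm, hx1, hxm, hocc, hgap⟩ := hC
  have hh := hocc m hm le_rfl
  rw [hxm] at hh
  have e1 : T.length - u.length + 1 + u.length - 1 = T.length := by omega
  have e2 : T.length - u.length + 1 - 1 = T.length - u.length := by omega
  rw [substr, e1, e2, List.take_length] at hh
  exact hh

def Cov (r : List α → List α → Prop) (u T : List α) : Prop :=
  ∃ P : Set ℕ,
    (∀ p ∈ P, 1 ≤ p ∧ p ≤ T.length - u.length + 1 ∧ r u (substr T p (p + u.length - 1))) ∧
    (∀ i, 1 ≤ i → i ≤ T.length → ∃ p ∈ P, p ≤ i ∧ i ≤ p + u.length - 1)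

lemma chain_build' (P : Set ℕ) (a q : ℕ) (hPle : ∀ p ∈ P, p ≤ q)
    (dense : ∀ p ∈ P, p < q → ∃ p' ∈ P, p < p' ∧ p' ≤ p + a) :
    ∀ n p, p ∈ P → q - p ≤ n →
      ∃ (m : ℕ) (x : ℕ → ℕ), 1 ≤ m ∧ x 1 = p ∧ x m = q ∧ (∀ k, 1 ≤ k → k ≤ m → x k ∈ P) ∧
        (∀ k, 1 < k → k ≤ m → x (k - 1) < x k ∧ x k ≤ x (k - 1) + a) := by
  intro n
  induction n with
  | zero =>
    intro p hp hn
    have hpq : p = q := le_antisymm (hPle p hp) (by omega)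
    exact ⟨1, fun _ => p, le_rfl, rfl, hpq, fun k _ _ => hp, by intro k h1 h2; omega⟩
  | succ n ih =>
    intro p hp hn
    by_cases hpq : p = q
    · exact ⟨1, fun _ => p, le_rfl, rfl, hpq, fun k _ _ => hp, by intro k h1 h2; omega⟩
    · have hlt : p < q := lt_of_le_of_ne (hPle p hp) hpq
      obtain ⟨p', hp', hpp', hple⟩ := dense p hp hlt
      obtain ⟨m, x, hm, hx1, hxm, hmem, hgap⟩ := ih p' hp' (by omega)
      refine ⟨m + 1, fun k => if k ≤ 1 then p else x (k - 1), by omega, by simp, ?_, ?_, ?_⟩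
      · have hne : ¬ (m + 1 ≤ 1) := by omega
        simp only [hne, if_false]
        simpa using hxm
      · intro k hk1 hkm
        by_cases hk : k ≤ 1
        · simp only [hk, if_true]; exact hp
        · simp only [hk, if_false]
          exact hmem (k - 1) (by omega) (by omega)
      · intro k hk1 hkm
        have hk2 : ¬ (k ≤ 1) := by omega
        rcases eq_or_lt_of_le (show 2 ≤ k by omega) with h2 | h2
        · rw [← h2]
          simp only [show (2:ℕ) - 1 = 1 from rfl, le_refl, if_true,
            show ¬ ((2:ℕ) ≤ 1) by omega, if_false, hx1]
          exact ⟨hpp', hple⟩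
        · have e1 : ¬ (k - 1 ≤ 1) := by omega
          simp only [hk2, e1, if_false]
          exact hgap (k - 1) (by omega) (by omega)

lemma isCover_of_cov' (h : SCER r) {u T : List α} (ha : 1 ≤ u.length) (hle : u.length ≤ T.length)
    (hc : Cov r u T) : IsCover r u T := by
  obtain ⟨P, hP, hcov⟩ := hc
  have h1 : (1:ℕ) ∈ P := by
    obtain ⟨p, hp, hp1, _⟩ := hcov 1 le_rfl (by omega)
    have h2 := hP p hp
    have h3 : p = 1 := by omega
    exact h3 ▸ hp
  have hq : T.length - u.length + 1 ∈ P := by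
    obtain ⟨p, hp, hp1, hp2⟩ := hcov T.length (by omega) le_rfl
    have h3 := hP p hp
    have h4 : p = T.length - u.length + 1 := by omega
    exact h4 ▸ hp
  have dense : ∀ p ∈ P, p < T.length - u.length + 1 →
      ∃ p' ∈ P, p < p' ∧ p' ≤ p + u.length := by
    intro p hp hpq
    obtain ⟨p', hp', h1', h2'⟩ := hcov (p + u.length) (by omega) (by omega)
    have h3 := hP p' hp'
    exact ⟨p', hp', by omega, by omega⟩
  obtain ⟨m, x, hm, hx1, hxm, hmem, hgap⟩ :=
    chain_build' P u.length (T.length - u.length + 1) (fun p hp => (hP p hp).2.1) dense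
      (T.length - u.length + 1) 1 h1 (by omega)
  exact ⟨m, x, hm, hx1, hxm, fun k hk1 hk2 => (hP _ (hmem k hk1 hk2)).2.2, hgap⟩

lemma cov_of_isCover' (h : SCER r) {u T : List α} (ha : 1 ≤ u.length)
    (hle : u.length ≤ T.length) (hc : IsCover r u T) : Cov r u T := by
  classical
  obtain ⟨m, x, hm, hx1, hxm, hocc, hgap⟩ := hc
  have mono : ∀ d k, 1 ≤ k → k + d ≤ m → x k ≤ x (k + d) := by
    intro d
    induction d with
    | zero => intro k _ _; simp
    | succ d ih =>
      intro k hk1 hkd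
      have h1 := ih k hk1 (by omega)
      have h2 := hgap (k + d + 1) (by omega) (by omega)
      have e : k + d + 1 - 1 = k + d := by omega
      rw [e] at h2
      show x k ≤ x (k + d + 1)
      omega
  refine ⟨{p | ∃ k, 1 ≤ k ∧ k ≤ m ∧ x k = p}, ?_, ?_⟩
  · rintro p ⟨k, hk1, hkm, rfl⟩
    have hx1le : 1 ≤ x k := by
      have hh := mono (k - 1) 1 le_rfl (by omega)
      have e : 1 + (k - 1) = k := by omega
      rw [e, hx1] at hh
      exact hh
    have hxqle : x k ≤ T.length - u.length + 1 := by
      have hh := mono (m - k) k hk1 (by omega)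
      have e : k + (m - k) = m := by omega
      rw [e, hxm] at hh
      exact hh
    exact ⟨hx1le, hxqle, hocc k hk1 hkm⟩
  · intro i hi1 hi2
    have hP1 : (fun k => 1 ≤ k ∧ x k ≤ i) 1 := ⟨le_rfl, by rw [hx1]; exact hi1⟩
    have hKspec := Nat.findGreatest_spec (P := fun k => 1 ≤ k ∧ x k ≤ i) (m := 1) hm hP1
    have hKm : Nat.findGreatest (fun k => 1 ≤ k ∧ x k ≤ i) m ≤ m := Nat.findGreatest_le m
    set K := Nat.findGreatest (fun k => 1 ≤ k ∧ x k ≤ i) m with hK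
    refine ⟨x K, ⟨K, hKspec.1, hKm, rfl⟩, hKspec.2, ?_⟩
    rcases eq_or_lt_of_le hKm with he | hlt
    · have hxK : x K = T.length - u.length + 1 := by rw [he, hxm]
      omega
    · have hnot := Nat.findGreatest_is_greatest (P := fun k => 1 ≤ k ∧ x k ≤ i)
        (show K < K + 1 by omega) (show K + 1 ≤ m by omega)
      have hgt : i < x (K + 1) := by
        by_contra hcc
        exact hnot ⟨by omega, by omega⟩
      have hg := hgap (K + 1) (by omega) (by omega)
      have e : K + 1 - 1 = K := by omega
      rw [e] at hg
      omega

lemma cov_trans' (h : SCER r) {u v T : List α} (ha : 1 ≤ u.length) (hab : u.length ≤ v.length)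
    (hbn : v.length ≤ T.length) (hu : Cov r u v) (hv : Cov r v T) : Cov r u T := by
  obtain ⟨Pu, hPu, hcu⟩ := hu
  obtain ⟨Pv, hPv, hcv⟩ := hv
  refine ⟨{p | ∃ z ∈ Pv, ∃ y ∈ Pu, p = z + y - 1}, ?_, ?_⟩
  · rintro p ⟨z, hz, y, hy, rfl⟩
    obtain ⟨hz1, hz2, hzr⟩ := hPv z hz
    obtain ⟨hy1, hy2, hyr⟩ := hPu y hy
    refine ⟨by omega, by omega, ?_⟩
    have hcong := h.substr_congr v (substr T z (z + v.length - 1)) hzr y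
      (y + u.length - 1) hy1 (by omega) (by omega)
    rw [substr_substr' T z y u.length v.length hz1 hy1 (by omega) ha] at hcong
    exact h.equiv.trans hyr hcong
  · intro i hi1 hi2
    obtain ⟨z, hz, hz1, hz2⟩ := hcv i hi1 hi2
    obtain ⟨hzb1, hzb2, -⟩ := hPv z hz
    obtain ⟨y, hy, hy1, hy2⟩ := hcu (i - z + 1) (by omega) (by omega)
    obtain ⟨hyb1, hyb2, -⟩ := hPu y hy
    exact ⟨z + y - 1, ⟨z, hz, y, hy, rfl⟩, by omega, by omega⟩

lemma isCover_trans' (h : SCER r) {u v T : List α} (huv : IsCover r u v)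
    (hvT : IsCover r v T) : IsCover r u T := by
  by_cases ha : u.length = 0
  · have hv0 : v.length = 0 := cover_nil' huv ha
    have hT0 : T.length = 0 := cover_nil' hvT hv0
    refine ⟨1, fun _ => 1, le_rfl, rfl, by simp; omega, ?_, by intro k h1 h2; omega⟩
    intro k _ _
    have hu0 : u = [] := List.length_eq_zero_iff.mp ha
    have hT : T = [] := List.length_eq_zero_iff.mp hT0
    rw [hu0, hT]
    simpa [substr] using h.equiv.refl []
  · have ha1 : 1 ≤ u.length := by omega
    have hab := cover_le' h huv
    have hbn := cover_le' h hvT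
    exact isCover_of_cov' h ha1 (le_trans hab hbn)
      (cov_trans' h ha1 hab hbn (cov_of_isCover' h ha1 hab huv)
        (cov_of_isCover' h (by omega) hbn hvT))

lemma cover_of_covers' (h : SCER r) {u v T : List α} (hu : IsCover r u T) (hv : IsCover r v T)
    (hab : u.length ≤ v.length) : IsCover r u v := by
  by_cases ha : u.length = 0
  · have hT0 := cover_nil' hu ha
    have hv0 : v.length = 0 := by have := cover_le' h hv; omega
    refine ⟨1, fun _ => 1, le_rfl, rfl, by simp; omega, ?_, by intro k h1 h2; omega⟩
    intro k _ _
    have hu0 : u = [] := List.length_eq_zero_iff.mp ha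
    have hveq : v = [] := List.length_eq_zero_iff.mp hv0
    rw [hu0, hveq]
    simpa [substr] using h.equiv.refl []
  · have ha1 : 1 ≤ u.length := by omega
    have hbn := cover_le' h hv
    have han := cover_le' h hu
    obtain ⟨P, hP, hcov⟩ := cov_of_isCover' h ha1 han hu
    apply isCover_of_cov' h ha1 hab
    refine ⟨{p | (p ∈ P ∧ p ≤ v.length - u.length + 1) ∨ p = v.length - u.length + 1}, ?_, ?_⟩
    · rintro p (⟨hp, hple⟩ | rfl)
      · obtain ⟨hp1, hp2, hpr⟩ := hP p hp
        refine ⟨hp1, hple, ?_⟩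
        have hvp := cover_prefix' (r := r) hv
        have hcong := h.substr_congr v (T.take v.length) hvp p (p + u.length - 1) hp1
          (by omega) (by omega)
        rw [substr_take' T v.length p (p + u.length - 1) (by omega)] at hcong
        exact h.equiv.trans hpr (h.equiv.symm hcong)
      · refine ⟨by omega, le_rfl, ?_⟩
        have e1 : v.length - u.length + 1 + u.length - 1 = v.length := by omega
        have e2 : v.length - u.length + 1 - 1 = v.length - u.length := by omega
        have husuf := cover_suffix' h hu
        have hvsuf := cover_suffix' h hv
        have hcong := h.substr_congr v (T.drop (T.length - v.length)) hvsuf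
          (v.length - u.length + 1) v.length (by omega) (by omega) le_rfl
        have ev : substr v (v.length - u.length + 1) v.length = v.drop (v.length - u.length) := by
          rw [substr, e2, List.take_length]
        have eT : substr (T.drop (T.length - v.length)) (v.length - u.length + 1) v.length
            = T.drop (T.length - u.length) := by
          rw [substr, e2, List.take_of_length_le (by simp [List.length_drop]; omega),
            List.drop_drop]
          congr 1
          omega
        rw [ev, eT] at hcong
        rw [substr, e1, e2, List.take_length]
        exact h.equiv.trans husuf (h.equiv.symm hcong)
    · intro i hi1 hi2
      obtain ⟨p, hp, hp1, hp2⟩ := hcov i hi1 (by omega)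
      by_cases hple : p ≤ v.length - u.length + 1
      · exact ⟨p, Or.inl ⟨hp, hple⟩, hp1, hp2⟩
      · exact ⟨v.length - u.length + 1, Or.inr rfl, by omega, by omega⟩

lemma r_of_cover_eq' (h : SCER r) {u v : List α} (hc : IsCover r u v)
    (he : u.length = v.length) : r u v := by
  obtain ⟨m, x, hm, hx1, hxm, hocc, hgap⟩ := hc
  have hh := hocc m hm le_rfl
  rw [hxm] at hh
  have e : v.length - u.length + 1 = 1 := by omega
  rw [e] at hh
  have e2 : 1 + u.length - 1 = u.length := by omega
  rw [e2, substr_one', he, List.take_length] at hh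
  exact hh

end AuxStmt9

theorem stmt9 (r : List α → List α → Prop) (h : SCER r) (T C : List α)
    (hC : IsCover r C T) :
    (Primitive r C ↔ ∀ C' : List α, IsCover r C' T → C.length ≤ C'.length) ∧
    (∀ C' : List α, IsCover r C' T → Primitive r C → Primitive r C' → r C C') := by
  constructor
  · constructor
    · intro hprim C' hC'
      by_contra hlt
      push_neg at hlt
      exact hprim ⟨C', cover_of_covers' h hC' hC (le_of_lt hlt), hlt⟩
    · intro hmin
      rintro ⟨D, hD, hlt⟩
      have := hmin D (isCover_trans' h hD hC)
      omega
  · intro C' hC' hp hp'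
    rcases le_total C.length C'.length with hle | hle
    · have hcov := cover_of_covers' h hC hC' hle
      rcases eq_or_lt_of_le hle with he | hlt'
      · exact r_of_cover_eq' h hcov he
      · exact absurd ⟨C, hcov, hlt'⟩ hp'
    · have hcov := cover_of_covers' h hC' hC hle
      rcases eq_or_lt_of_le hle with he | hlt'
      · exact h.equiv.symm (r_of_cover_eq' h hcov he)
      · exact absurd ⟨C', hcov, hlt'⟩ hp
end

section
/- Let ≈ be an SCER, T a string, and 1 ≤ i ≤ n. For any 1 ≤ j < i − Border_T[i], the prefix T[1:j] is a left ≈-seed of T[1:i] if and only if T[1:j] is the longest proper ≈-cover of some prefix T[1:m] which is itself a left ≈-seed of T[1:i]. -/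
variable {α : Type*}

theorem substr_length (X : List α) (a b : ℕ) :
    (substr X a b).length = min b X.length - (a-1) := by
  simp [substr]

theorem substr_take (X : List α) (s a b : ℕ) (h : b ≤ s) :
    substr (X.take s) a b = substr X a b := by
  simp [substr, List.take_take, min_eq_left h]

theorem substr_one (X : List α) (b : ℕ) : substr X 1 b = X.take b := by simp [substr]

theorem substr_substr (X : List α) (s e a b : ℕ) (hs : 1 ≤ s) (ha : 1 ≤ a)
    (hb : s - 1 + b ≤ e) :
    substr (substr X s e) a b = substr X (s + a - 1) (s - 1 + b) := by
  have h1 : substr X s e = (X.take e).drop (s-1) := rfl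
  rw [substr, h1, List.take_drop, List.drop_drop, List.take_take,
    min_eq_left (le_trans hb (le_refl e) |> fun h => h)]
  · congr 1
    omega

theorem substr_drop (X : List α) (s a b : ℕ) (ha : 1 ≤ a) :
    substr (X.drop s) a b = substr X (s + a) (s + b) := by
  rw [substr, List.take_drop, List.drop_drop, substr]
  congr 1
  omega


def occAt (r : List α → List α → Prop) (C X : List α) (x : ℕ) : Prop :=
  r C (substr X x (x + C.length - 1))

theorem occAt_bounds {r : List α → List α → Prop} (h : SCER r) {C X : List α} {x : ℕ}
    (hc : 1 ≤ C.length) (ho : occAt r C X x) :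
    1 ≤ x ∧ x + C.length - 1 ≤ X.length := by
  have hlen := h.length_eq _ _ ho
  rw [substr_length] at hlen
  omega

theorem isCover_to_pos {r : List α → List α → Prop} (h : SCER r) {C X : List α}
    (hc : 1 ≤ C.length) (hcov : IsCover r C X) :
    ∀ p, 1 ≤ p → p ≤ X.length → ∃ x, x ≤ p ∧ p ≤ x + C.length - 1 ∧ occAt r C X x := by
  obtain ⟨m, x, hm, hx1, hxm, hocc, hgap⟩ := hcov
  have hcX : C.length ≤ X.length := by
    have := occAt_bounds h hc (hocc 1 le_rfl hm)
    omega
  intro p hp1 hpn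
  classical
  set P : ℕ → Prop := fun k => 1 ≤ k ∧ x k ≤ p with hP
  have hP1 : P 1 := ⟨le_rfl, by omega⟩
  set k0 := Nat.findGreatest P m with hk0
  have hk0ge : 1 ≤ k0 := Nat.le_findGreatest hm hP1
  have hk0P : P k0 := Nat.findGreatest_spec hm hP1
  have hk0le : k0 ≤ m := Nat.findGreatest_le m
  have hnext : k0 < m → ¬ P (k0 + 1) := fun hlt =>
    Nat.findGreatest_is_greatest (Nat.lt_succ_self _) hlt
  obtain ⟨hk0a, hk0b⟩ := hk0P
  clear_value k0
  rcases eq_or_lt_of_le hk0le with heq | hlt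
  · subst heq
    exact ⟨x k0, hk0b, by omega, hocc k0 hk0ge le_rfl⟩
  · have hn := hnext hlt
    have hxk1 : p < x (k0 + 1) := by
      by_contra hcon
      push_neg at hcon
      exact hn ⟨by omega, hcon⟩
    have hg := hgap (k0 + 1) (by omega) (by omega)
    simp only [Nat.add_sub_cancel] at hg
    exact ⟨x k0, hk0b, by omega, hocc k0 hk0ge (by omega)⟩

theorem pos_to_isCover {r : List α → List α → Prop} (h : SCER r) {C X : List α}
    (hc : 1 ≤ C.length) (hcX : C.length ≤ X.length)
    (hpos : ∀ p, 1 ≤ p → p ≤ X.length → ∃ x, x ≤ p ∧ p ≤ x + C.length - 1 ∧ occAt r C X x) :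
    IsCover r C X := by
  classical
  set c := C.length with hcdef
  set n := X.length with hndef
  set O : Finset ℕ := (Finset.range (n+1)).filter (fun y => occAt r C X y) with hO
  have hmemO : ∀ y, y ∈ O ↔ occAt r C X y ∧ 1 ≤ y ∧ y + c - 1 ≤ n := by
    intro y
    simp only [hO, Finset.mem_filter, Finset.mem_range]
    constructor
    · rintro ⟨-, hy⟩
      exact ⟨hy, occAt_bounds h hc hy⟩
    · rintro ⟨hy, h1, h2⟩
      exact ⟨by omega, hy⟩
  have h1O : (1 : ℕ) ∈ O := by
    obtain ⟨y, hy1, hy2, hy3⟩ := hpos 1 le_rfl (by omega)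
    have hb := occAt_bounds h hc hy3
    have : y = 1 := by omega
    rw [hmemO]
    exact ⟨this ▸ hy3, by omega, by omega⟩
  have hlastO : n - c + 1 ∈ O := by
    obtain ⟨y, hy1, hy2, hy3⟩ := hpos n (by omega) le_rfl
    have hb := occAt_bounds h hc hy3
    have : y = n - c + 1 := by omega
    rw [hmemO]
    exact ⟨this ▸ hy3, by omega, by omega⟩
  have hOne : O.Nonempty := ⟨1, h1O⟩
  set m := O.card with hm
  have hm1 : 1 ≤ m := Finset.card_pos.mpr hOne
  set f := O.orderIsoOfFin rfl with hf
  set x : ℕ → ℕ := fun k => if hk : k - 1 < m then (f ⟨k - 1, hk⟩ : ℕ) else 0 with hx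
  have hxval : ∀ k, 1 ≤ k → k ≤ m → x k ∈ O := by
    intro k hk1 hk2
    have hk : k - 1 < m := by omega
    simp only [hx, dif_pos hk]
    exact (f ⟨k - 1, hk⟩).2
  have hxmono : ∀ a b : Fin m, a < b → (f a : ℕ) < f b := by
    intro a b hab
    exact f.strictMono hab
  have hfsurj : ∀ y ∈ O, ∃ b : Fin m, (f b : ℕ) = y := by
    intro y hy
    obtain ⟨b, hb⟩ := f.surjective ⟨y, hy⟩
    exact ⟨b, by rw [hb]⟩
  refine ⟨m, x, hm1, ?_, ?_, ?_, ?_⟩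
  · -- x 1 = 1
    have h0 : (0 : ℕ) < m := by omega
    have hmem := hxval 1 le_rfl hm1
    obtain ⟨b, hb⟩ := hfsurj 1 h1O
    have : (f ⟨0, h0⟩ : ℕ) ≤ (f b : ℕ) :=
      Subtype.coe_le_coe.mpr (f.monotone (Fin.le_def.mpr (by simp)))
    have hge : 1 ≤ (f ⟨0, h0⟩ : ℕ) := ((hmemO _).mp (f ⟨0, h0⟩).2).2.1
    have h11 : x 1 = (f ⟨0, h0⟩ : ℕ) := by simp only [hx]; norm_num; rw [dif_pos h0]
    omega
  · -- x m = n - c + 1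
    have hlast : m - 1 < m := by omega
    have hub : ∀ y ∈ O, y ≤ n - c + 1 := by
      intro y hy
      have := (hmemO y).mp hy
      omega
    obtain ⟨b, hb⟩ := hfsurj _ hlastO
    have hle : (f b : ℕ) ≤ (f ⟨m - 1, hlast⟩ : ℕ) :=
      Subtype.coe_le_coe.mpr (f.monotone (Fin.le_def.mpr (by
        have := b.isLt
        simp
        omega)))
    have := hub _ (f ⟨m - 1, hlast⟩).2
    have hmm : x m = (f ⟨m - 1, hlast⟩ : ℕ) := by simp only [hx, dif_pos hlast]
    omega
  · intro k hk1 hk2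
    exact ((hmemO _).mp (hxval k hk1 hk2)).1
  · intro k hk1 hk2
    have ha : k - 1 - 1 < m := by omega
    have hb : k - 1 < m := by omega
    have hxk1 : x (k-1) = (f ⟨k-1-1, ha⟩ : ℕ) := by simp only [hx, dif_pos ha]
    have hxk : x k = (f ⟨k-1, hb⟩ : ℕ) := by simp only [hx, dif_pos hb]
    have hstrict : (f ⟨k-1-1, ha⟩ : ℕ) < f ⟨k-1, hb⟩ := by
      apply hxmono
      apply Fin.mk_lt_mk.mpr
      omega
    constructor
    · omega
    · -- gap
      by_contra hcon
      push_neg at hcon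
      set g := x (k - 1) with hg
      have hgO := hxval (k-1) (by omega) (by omega)
      have hgmem := (hmemO g).mp hgO
      have hgn : g + c ≤ n := by
        -- if g = n - c + 1 then g is max so x k ≤ g contradiction
        rcases Nat.lt_or_ge (g + c) (n + 1) with hlt | hge
        · omega
        · exfalso
          have hgeq : g = n - c + 1 := by omega
          have hub : ∀ y ∈ O, y ≤ n - c + 1 := by
            intro y hy
            have := (hmemO y).mp hy
            omega
          have := hub _ (f ⟨k-1, hb⟩).2
          omega
      obtain ⟨y, hy1, hy2, hy3⟩ := hpos (g + c) (by omega) hgn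
      have hyb := occAt_bounds h hc hy3
      have hyO : y ∈ O := (hmemO y).mpr ⟨hy3, hyb⟩
      obtain ⟨b', hb'⟩ := hfsurj y hyO
      have hygt : g < y := by omega
      have hblt : k - 1 - 1 < b'.val := by
        by_contra hc2
        push_neg at hc2
        have h2 : b' ≤ (⟨k-1-1, ha⟩ : Fin m) := Fin.le_def.mpr (by simpa using hc2)
        have h3 : (f b' : ℕ) ≤ (f ⟨k-1-1, ha⟩ : ℕ) := Subtype.coe_le_coe.mpr (f.monotone h2)
        omega
      have h4 : (⟨k-1, hb⟩ : Fin m) ≤ b' := Fin.le_def.mpr (by simp; omega)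
      have h5 : (f ⟨k-1, hb⟩ : ℕ) ≤ (f b' : ℕ) := Subtype.coe_le_coe.mpr (f.monotone h4)
      omega

theorem cover_length_le {r : List α → List α → Prop} (h : SCER r) {C X : List α}
    (hc : 1 ≤ C.length) (hcov : IsCover r C X) : C.length ≤ X.length := by
  obtain ⟨m, x, hm, hx1, hxm, hocc, hgap⟩ := hcov
  have hb := occAt_bounds h hc (hocc 1 le_rfl hm)
  omega

theorem cover_prefix {r : List α → List α → Prop} (h : SCER r) {C X : List α}
    (hc : 1 ≤ C.length) (hcov : IsCover r C X) : r C (X.take C.length) := by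
  obtain ⟨m, x, hm, hx1, hxm, hocc, hgap⟩ := hcov
  have ho := hocc 1 le_rfl hm
  rw [hx1] at ho
  have he : (1 : ℕ) + C.length - 1 = C.length := by omega
  rw [he, substr_one] at ho
  exact ho

theorem cover_congr_left {r : List α → List α → Prop} (h : SCER r) {C C' X : List α}
    (hCC' : r C C') (hcov : IsCover r C X) : IsCover r C' X := by
  obtain ⟨m, x, hm, hx1, hxm, hocc, hgap⟩ := hcov
  have hlen : C.length = C'.length := h.length_eq _ _ hCC'
  refine ⟨m, x, hm, hx1, by rw [← hlen]; exact hxm, ?_, by rw [← hlen]; exact hgap⟩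
  intro k hk1 hk2
  rw [← hlen]
  exact h.equiv.trans (h.equiv.symm hCC') (hocc k hk1 hk2)

theorem cover_congr_right {r : List α → List α → Prop} (h : SCER r) {C X Y : List α}
    (hc : 1 ≤ C.length) (hXY : r X Y) (hcov : IsCover r C X) : IsCover r C Y := by
  obtain ⟨m, x, hm, hx1, hxm, hocc, hgap⟩ := hcov
  have hlen : X.length = Y.length := h.length_eq _ _ hXY
  refine ⟨m, x, hm, hx1, by rw [← hlen]; exact hxm, ?_, hgap⟩
  intro k hk1 hk2
  have ho := hocc k hk1 hk2
  have hb := occAt_bounds h hc ho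
  have := h.substr_congr _ _ hXY (x k) (x k + C.length - 1) hb.1 (by omega) hb.2
  exact h.equiv.trans ho this

theorem cover_self {r : List α → List α → Prop} (h : SCER r) (X : List α) :
    IsCover r X X := by
  refine ⟨1, fun _ => 1, le_rfl, rfl, by simp, ?_, fun k hk1 hk2 => absurd (hk1.trans_le hk2) (lt_irrefl 1)⟩
  intro k _ _
  have : substr X 1 (1 + X.length - 1) = X := by
    rcases Nat.eq_zero_or_pos X.length with h0 | h0
    · rw [List.length_eq_zero_iff] at h0
      subst h0
      rfl
    · have : (1 : ℕ) + X.length - 1 = X.length := by omega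
      rw [this, substr_one, List.take_length]
  rw [this]
  exact h.equiv.refl X

theorem cover_trans {r : List α → List α → Prop} (h : SCER r) {C X U : List α}
    (hc : 1 ≤ C.length) (h1 : IsCover r C X) (h2 : IsCover r X U) : IsCover r C U := by
  have hcX : C.length ≤ X.length := cover_length_le h hc h1
  have hX1 : 1 ≤ X.length := by omega
  have hXU : X.length ≤ U.length := cover_length_le h hX1 h2
  apply pos_to_isCover h hc (by omega)
  intro p hp1 hpn
  obtain ⟨x, hx1, hx2, hx3⟩ := isCover_to_pos h hX1 h2 p hp1 hpn
  have hxb := occAt_bounds h hX1 hx3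
  set q := p - x + 1 with hq
  have hq1 : 1 ≤ q := by omega
  have hqX : q ≤ X.length := by omega
  obtain ⟨y, hy1, hy2, hy3⟩ := isCover_to_pos h hc h1 q hq1 hqX
  have hyb := occAt_bounds h hc hy3
  refine ⟨x + y - 1, by omega, by omega, ?_⟩
  unfold occAt at hx3 hy3 ⊢
  have hsub := h.substr_congr _ _ hx3 y (y + C.length - 1) hyb.1 (by omega) hyb.2
  have heq : substr (substr U x (x + X.length - 1)) y (y + C.length - 1)
      = substr U (x + y - 1) (x + y - 1 + C.length - 1) := by
    rw [substr_substr U x (x + X.length - 1) y (y + C.length - 1) hxb.1 hyb.1 (by omega)]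
    congr 1 <;> omega
  rw [heq] at hsub
  exact h.equiv.trans hy3 hsub

theorem cover_chain {r : List α → List α → Prop} (h : SCER r) {C1 C2 X : List α}
    (hc1 : 1 ≤ C1.length) (h1 : IsCover r C1 X) (h2 : IsCover r C2 X)
    (h12 : C1.length ≤ C2.length) : IsCover r C1 C2 := by
  set a := C1.length with ha
  set b := C2.length with hb
  set n := X.length with hn
  have hbn : b ≤ n := cover_length_le h (by omega) h2
  have han : a ≤ n := by omega
  -- last occurrence of C2
  obtain ⟨m2, x2, hm2, hx21, hx2m, hocc2, hgap2⟩ := h2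
  have hoW := hocc2 m2 hm2 le_rfl
  rw [hx2m] at hoW
  have hWeq : n - b + 1 + b - 1 = n := by omega
  rw [hWeq] at hoW
  set W := substr X (n - b + 1) n with hW
  have hWlen : W.length = b := by
    rw [hW, substr_length]
    omega
  -- C1 covers W
  have hcovW : IsCover r C1 W := by
    apply pos_to_isCover h hc1 (by omega)
    intro q hq1 hqb
    rw [hWlen] at hqb
    rcases le_or_gt q a with hqa | hqa
    · -- occurrence at position 1 of W
      refine ⟨1, hq1, by omega, ?_⟩
      unfold occAt
      have he1 : (1:ℕ) + a - 1 = a := by omega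
      rw [he1, substr_one]
      -- W.take a = substr W 1 a; C1 ≈ X.take a ≈ C2.take a ≈ W.take a
      have hC1 : r C1 (X.take a) := cover_prefix h hc1 h1
      have hC2 : r C2 (X.take b) := by
        have ho := hocc2 1 le_rfl hm2
        rw [hx21] at ho
        have he2 : (1 : ℕ) + b - 1 = b := by omega
        rw [he2, substr_one] at ho
        exact ho
      have hsub1 := h.substr_congr _ _ hC2 1 a le_rfl (by omega) (by omega)
      have hsub2 := h.substr_congr _ _ hoW 1 a le_rfl (by omega) (by omega)
      rw [substr_one] at hsub1 hsub2
      rw [substr_take X b 1 a h12, substr_one] at hsub1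
      -- hsub1 : r (C2.take a) (X.take a), hsub2 : r (C2.take a) (W.take a)
      exact h.equiv.trans hC1 (h.equiv.trans (h.equiv.symm hsub1) hsub2)
    · -- occurrence inside the window
      set p := n - b + q with hp
      obtain ⟨y, hy1, hy2, hy3⟩ := isCover_to_pos h hc1 h1 p (by omega) (by omega)
      have hyb := occAt_bounds h hc1 hy3
      have hyge : n - b + 1 ≤ y := by omega
      set w := y - (n - b) with hw
      refine ⟨w, by omega, by omega, ?_⟩
      unfold occAt
      have heq : substr W w (w + a - 1) = substr X y (y + a - 1) := by
        rw [hW, substr_substr X (n - b + 1) n w (w + a - 1) (by omega) (by omega) (by omega)]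
        congr 1 <;> omega
      rw [heq]
      exact hy3
  exact cover_congr_right h hc1 (h.equiv.symm hoW) hcovW


theorem isLeftSeed_take_iff (r : List α → List α → Prop) (T : List α) {i s : ℕ}
    (h2 : i ≤ T.length) (hs : s ≤ i) :
    IsLeftSeed r (T.take s) (T.take i) ↔
    ∃ k l, k ≤ l ∧ l < s ∧ IsCover r (T.take s) (T.take (i - k)) ∧
      r (T.take l) ((T.take i).drop (i - l)) := by
  have hlW : (T.take i).length = i := by rw [List.length_take]; omega
  have hlS : (T.take s).length = s := by rw [List.length_take]; omega
  unfold IsLeftSeed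
  rw [hlW, hlS]
  constructor
  · rintro ⟨k, l, hkl, hls, hcov, hsuf⟩
    rw [List.take_take, min_eq_left (by omega : i - k ≤ i)] at hcov
    rw [List.take_take, min_eq_left (by omega : l ≤ s)] at hsuf
    exact ⟨k, l, hkl, hls, hcov, hsuf⟩
  · rintro ⟨k, l, hkl, hls, hcov, hsuf⟩
    refine ⟨k, l, hkl, hls, ?_, ?_⟩
    · rw [List.take_take, min_eq_left (by omega : i - k ≤ i)]
      exact hcov
    · rw [List.take_take, min_eq_left (by omega : l ≤ s)]
      exact hsuf

theorem border_le {r : List α → List α → Prop} (h : SCER r) {T : List α} {Bd : ℕ → ℕ}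
    (hB : BorderArr r T Bd) {i : ℕ} (h1 : 1 ≤ i) (h2 : i ≤ T.length)
    {l : ℕ} (hl : l < i) (hsuf : r (T.take l) ((T.take i).drop (i - l))) : l ≤ Bd i := by
  have hlW : (T.take i).length = i := by rw [List.length_take]; omega
  have hlL : (T.take l).length = l := by rw [List.length_take]; omega
  apply (hB i h1 h2).2
  refine ⟨T.take l, hlL, hl, ?_, ?_, ?_⟩
  · rw [hlL, hlW]; omega
  · rw [hlL, List.take_take, min_eq_left (by omega : l ≤ i)]
    exact h.equiv.refl _
  · rw [hlL, hlW]
    exact hsuf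


theorem stmt15 (r : List α → List α → Prop) (h : SCER r) (T : List α) (Bd L : ℕ → ℕ)
    (hB : BorderArr r T Bd) (hL : LCoverArr r T L) (i j : ℕ)
    (h1 : 1 ≤ i) (h2 : i ≤ T.length) (h3 : 1 ≤ j) (h4 : j < i - Bd i) :
    IsLeftSeed r (T.take j) (T.take i) ↔
      ∃ m, 1 ≤ m ∧ m ≤ i ∧ L m = j ∧ IsLeftSeed r (T.take m) (T.take i) := by
  classical
  obtain ⟨B0, hB0len, hBdlt, -⟩ := (hB i h1 h2).1
  have hji : j < i := by omega
  have hjl : (T.take j).length = j := by rw [List.length_take]; omega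
  have hjl1 : 1 ≤ (T.take j).length := by omega
  constructor
  · -- forward
    intro hseed
    rw [isLeftSeed_take_iff r T h2 (le_of_lt hji)] at hseed
    obtain ⟨k, l, hkl, hlj, hcov, hsuf⟩ := hseed
    have hlBd : l ≤ Bd i := border_le h hB h1 h2 (by omega) hsuf
    have hki : j + k < i := by omega
    set P : ℕ → Prop := fun m' => j < m' ∧ m' ≤ i - k ∧
      IsCover r (T.take j) (T.take m') ∧ IsCover r (T.take m') (T.take (i - k)) with hP
    have hex : ∃ m', P m' := ⟨i - k, by omega, le_rfl, hcov, cover_self h (T.take (i - k))⟩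
    set m := Nat.find hex with hmdef
    obtain ⟨hjm, hmik, hcovjm, hcovmik⟩ : P m := Nat.find_spec hex
    have hmin : ∀ m', m' < m → ¬ P m' := fun m' hm' => Nat.find_min hex hm'
    clear_value m
    have hm1 : 1 ≤ m := by omega
    have hmi : m ≤ i := by omega
    have hmT : m ≤ T.length := by omega
    have hlM : (T.take m).length = m := by rw [List.length_take]; omega
    have hLm := hL m hm1 hmT
    have hjle : j ≤ L m := by
      apply hLm.2
      refine Set.mem_insert_iff.mpr (Or.inr ⟨T.take j, hjl, hcovjm, ?_⟩)
      rw [hjl, hlM]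
      exact hjm
    have hLle : L m ≤ j := by
      rcases Set.mem_insert_iff.mp hLm.1 with h0 | hC
      · omega
      · obtain ⟨C, hClen, hCcov, hClt⟩ := hC
        rw [hlM] at hClt
        by_contra hgt
        push_neg at hgt
        have hc1 : 1 ≤ C.length := by omega
        have hCpre : r C ((T.take m).take C.length) := cover_prefix h hc1 hCcov
        rw [List.take_take, min_eq_left (le_of_lt hClt)] at hCpre
        have hTc_cov : IsCover r (T.take C.length) (T.take m) := cover_congr_left h hCpre hCcov
        have hPc : P C.length := by
          refine ⟨by omega, by omega, ?_, ?_⟩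
          · exact cover_chain h hjl1 hcovjm hTc_cov (by rw [hjl, List.length_take]; omega)
          · apply cover_trans h (by rw [List.length_take]; omega) hTc_cov hcovmik
        exact hmin C.length (by omega) hPc
    refine ⟨m, hm1, hmi, le_antisymm hLle hjle, ?_⟩
    rw [isLeftSeed_take_iff r T h2 hmi]
    exact ⟨k, l, hkl, by omega, hcovmik, hsuf⟩
  · -- backward
    rintro ⟨m, hm1, hmi, hLmj, hseed⟩
    rw [isLeftSeed_take_iff r T h2 hmi] at hseed
    obtain ⟨k₂, l₂, hk₂l₂, hl₂m, hcov₂, hsuf₂⟩ := hseed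
    have hmT : m ≤ T.length := le_trans hmi h2
    have hlM : (T.take m).length = m := by rw [List.length_take]; omega
    have hLm := hL m hm1 hmT
    have hmem := hLm.1
    rw [hLmj] at hmem
    rcases Set.mem_insert_iff.mp hmem with h0 | hC
    · omega
    obtain ⟨C, hClen, hCcov, hClt⟩ := hC
    rw [hClen, hlM] at hClt
    have hjm : j < m := hClt
    have hc1 : 1 ≤ C.length := by omega
    have hCpre : r C ((T.take m).take C.length) := cover_prefix h hc1 hCcov
    rw [hClen, List.take_take, min_eq_left (le_of_lt hClt)] at hCpre
    have hSM : IsCover r (T.take j) (T.take m) := cover_congr_left h hCpre hCcov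
    have hmik : m ≤ i - k₂ := by
      have := cover_length_le h (by omega : 1 ≤ (T.take m).length) hcov₂
      rw [hlM, List.length_take] at this
      omega
    have hcovS : IsCover r (T.take j) (T.take (i - k₂)) := cover_trans h hjl1 hSM hcov₂
    have hl₂Bd : l₂ ≤ Bd i := border_le h hB h1 h2 (by omega) hsuf₂
    rw [isLeftSeed_take_iff r T h2 (le_of_lt hji)]
    rcases lt_or_ge l₂ j with hcase | hcase
    · exact ⟨k₂, l₂, hk₂l₂, hcase, hcovS, hsuf₂⟩
    -- heavy case : j ≤ l₂
    have hlW : (T.take i).length = i := by rw [List.length_take]; omega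
    have hl₂T : l₂ ≤ T.length := by omega
    have hll₂ : (T.take l₂).length = l₂ := by rw [List.length_take]; omega
    -- positional occurrences of T.take j in T.take m
    have hposM : ∀ p, 1 ≤ p → p ≤ m →
        ∃ y, y ≤ p ∧ p ≤ y + j - 1 ∧ occAt r (T.take j) (T.take m) y := by
      intro p hp1 hpm
      obtain ⟨y, ha, hb, hc⟩ := isCover_to_pos h hjl1 hSM p hp1 (by rw [hlM]; exact hpm)
      rw [hjl] at hb
      exact ⟨y, ha, hb, hc⟩
    have hoccb : ∀ y, occAt r (T.take j) (T.take m) y → 1 ≤ y ∧ y + j - 1 ≤ m := by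
      intro y hy
      have := occAt_bounds h hjl1 hy
      rw [hjl, hlM] at this
      exact this
    -- y' : least occurrence with end ≥ l₂ + 1
    have hexy : ∃ y, occAt r (T.take j) (T.take m) y ∧ l₂ + 1 ≤ y + j - 1 := by
      obtain ⟨y, ha, hb, hc⟩ := hposM (l₂ + 1) (by omega) (by omega)
      exact ⟨y, hc, hb⟩
    set y' := Nat.find hexy with hy'def
    obtain ⟨hy'occ, hy'end⟩ := Nat.find_spec hexy
    have hy'le : y' ≤ l₂ + 1 := by
      obtain ⟨y, ha, hb, hc⟩ := hposM (l₂ + 1) (by omega) (by omega)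
      exact le_trans (Nat.find_min' hexy ⟨hc, hb⟩) ha
    have hy'min : ∀ y, occAt r (T.take j) (T.take m) y → y + j - 1 ≤ l₂ ∨ y' ≤ y := by
      intro y hy
      rcases le_or_gt (y + j - 1) l₂ with hle | hgt
      · exact Or.inl hle
      · exact Or.inr (Nat.find_min' hexy ⟨hy, by omega⟩)
    have hy'b := hoccb y' hy'occ
    set l' := l₂ + 1 - y' with hl'def
    have hl'j : l' < j := by omega
    -- E' : last occurrence with end ≤ l₂
    have hocc1 : occAt r (T.take j) (T.take m) 1 := by
      have := cover_prefix h hjl1 hSM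
      rw [hjl] at this
      unfold occAt
      rw [hjl]
      have he : (1 : ℕ) + j - 1 = j := by omega
      rw [he, substr_one]
      exact this
    set Q : ℕ → Prop := fun y => occAt r (T.take j) (T.take m) y ∧ y + j - 1 ≤ l₂ with hQ
    have hQ1 : Q 1 := ⟨hocc1, by omega⟩
    set E' := Nat.findGreatest Q m with hE'def
    have hE'1 : 1 ≤ E' := Nat.le_findGreatest hm1 hQ1
    have hE'spec : Q E' := Nat.findGreatest_spec hm1 hQ1
    have hE'max : ∀ y, occAt r (T.take j) (T.take m) y → y + j - 1 ≤ l₂ → y ≤ E' := by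
      intro y hy hyl
      by_contra hgt
      push_neg at hgt
      have hym : y ≤ m := by have := hoccb y hy; omega
      exact Nat.findGreatest_is_greatest hgt hym ⟨hy, hyl⟩
    obtain ⟨hE'occ, hE'end⟩ := hE'spec
    set E := E' + j - 1 with hEdef
    have hEl₂ : E ≤ l₂ := hE'end
    have hy'E : y' ≤ E + 1 := by
      obtain ⟨y, ha, hb, hc⟩ := hposM (E + 1) (by omega) (by omega)
      rcases hy'min y hc with hle | hge
      · have := hE'max y hc hle
        omega
      · omega
    set k' := min k₂ (l₂ - E) with hk'def
    have hk'l' : k' ≤ l' := by omega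
    -- the suffix relation
    have hsufl' : r (T.take l') ((T.take i).drop (i - l')) := by
      rcases Nat.eq_zero_or_pos l' with h0 | hpos'
      · rw [h0, Nat.sub_zero]
        have hd : (T.take i).drop i = [] := List.drop_eq_nil_of_le (le_of_eq hlW)
        rw [hd, List.take_zero]
        exact h.equiv.refl []
      · have hy'l₂ : y' ≤ l₂ := by omega
        have h1' := h.substr_congr _ _ hy'occ 1 l' le_rfl hpos' (by rw [hjl]; omega)
        rw [substr_one] at h1'
        rw [List.take_take, min_eq_left (by omega : l' ≤ j)] at h1'
        rw [hjl] at h1'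
        have he1 : substr (substr (T.take m) y' (y' + j - 1)) 1 l' = substr (T.take m) y' l₂ := by
          rw [substr_substr _ y' (y' + j - 1) 1 l' (by omega) le_rfl (by omega)]
          congr 1 <;> omega
        rw [he1] at h1'
        rw [substr_take T m y' l₂ (by omega)] at h1'
        rw [← substr_take T l₂ y' l₂ (by omega)] at h1'
        have h2' := h.substr_congr _ _ hsuf₂ y' l₂ (by omega) (by omega) (by rw [hll₂])
        have he2 : substr ((T.take i).drop (i - l₂)) y' l₂
            = substr (T.take i) (i - l₂ + y') (i - l₂ + l₂) := substr_drop _ _ _ _ (by omega)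
        have he3 : substr (T.take i) (i - l₂ + y') (i - l₂ + l₂) = (T.take i).drop (i - l') := by
          rw [substr]
          have : i - l₂ + l₂ = i := by omega
          rw [this, List.take_take, min_self]
          congr 1
          omega
        rw [he2, he3] at h2'
        exact h.equiv.trans h1' h2'
    -- the cover
    have hcovk' : IsCover r (T.take j) (T.take (i - k')) := by
      have hik' : i - k' ≤ T.length := by omega
      have hlik' : (T.take (i - k')).length = i - k' := by rw [List.length_take]; omega
      apply pos_to_isCover h hjl1 (by rw [hjl, hlik']; omega)
      rw [hjl, hlik']
      intro p hp1 hpn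
      rcases le_or_gt p (i - k₂) with hple | hpgt
      · obtain ⟨y, ha, hb, hc⟩ := isCover_to_pos h hjl1 hcovS p hp1
          (by rw [List.length_take]; omega)
        have hyb := occAt_bounds h hjl1 hc
        rw [hjl, List.length_take] at hyb
        rw [hjl] at hb
        refine ⟨y, ha, hb, ?_⟩
        unfold occAt at hc ⊢
        rw [hjl] at hc ⊢
        rw [substr_take T (i - k') y (y + j - 1) (by omega)]
        rw [substr_take T (i - k₂) y (y + j - 1) (by omega)] at hc
        exact hc
      · have hk'eq : k' = l₂ - E := by omega
        set q := p - (i - l₂) with hqdef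
        have hq1 : 1 ≤ q := by omega
        have hqE : q ≤ E := by omega
        obtain ⟨y0, hy01, hy02, hy03⟩ := hposM q hq1 (by omega)
        have hy0b := hoccb y0 hy03
        -- choose an occurrence y with y ≤ q ≤ y + j - 1 ≤ l₂
        obtain ⟨y, hyo, hyq1, hyq2, hyl⟩ :
            ∃ y, occAt r (T.take j) (T.take m) y ∧ y ≤ q ∧ q ≤ y + j - 1 ∧ y + j - 1 ≤ l₂ := by
          rcases hy'min y0 hy03 with hle | hge
          · exact ⟨y0, hy03, hy01, hy02, hle⟩
          · refine ⟨E', hE'occ, by omega, by omega, hEl₂⟩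
        have hyb := hoccb y hyo
        have hyE : y + j - 1 ≤ E := by
          have := hE'max y hyo hyl
          omega
        refine ⟨i - l₂ + y, by omega, by omega, ?_⟩
        unfold occAt at hyo ⊢
        rw [hjl] at hyo ⊢
        rw [substr_take T m y (y + j - 1) (by omega)] at hyo
        rw [← substr_take T l₂ y (y + j - 1) hyl] at hyo
        have h2' := h.substr_congr _ _ hsuf₂ y (y + j - 1) (by omega) (by omega)
          (by rw [hll₂]; exact hyl)
        have he2 : substr ((T.take i).drop (i - l₂)) y (y + j - 1)
            = substr (T.take i) (i - l₂ + y) (i - l₂ + (y + j - 1)) :=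
          substr_drop _ _ _ _ (by omega)
        rw [he2] at h2'
        have hend : i - l₂ + y + j - 1 = i - l₂ + (y + j - 1) := by omega
        rw [hend]
        rw [substr_take T (i - k') (i - l₂ + y) (i - l₂ + (y + j - 1)) (by omega)]
        rw [← substr_take T i (i - l₂ + y) (i - l₂ + (y + j - 1)) (by omega)]
        exact h.equiv.trans hyo h2'
    exact ⟨k', l', hk'l', hl'j, hcovk', hsufl'⟩
end
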